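/- Suppose f : ℝⁿ → ℝ is continuously differentiable and bounded below, and a line search from point u along descent direction p finds β satisfying the Wolfe conditions; then such β exists whenever 0 < c₁ < c₂ < 1, f is bounded below along the ray {u + βp : β > 0}, and f is continuously differentiable. -/

import Mathlib

open scoped RealInnerProductSpace

theorem wolfe_step_exists (n : ℕ)
    (f : EuclideanSpace ℝ (Fin n) → ℝ)
    (hC1 : ContDiff ℝ 1 f)
    (hbdd : BddBelow (Set.range f))
    (u p : EuclideanSpace ℝ (Fin n))
    (hdesc : ⟪gradient f u, p⟫ < 0)
    (hray : BddBelow ((fun β : ℝ => f (u + β • p)) '' (Set.Ioi 0)))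
    (c₁ c₂ : ℝ) (hc₁ : 0 < c₁) (hc₁₂ : c₁ < c₂) (hc₂ : c₂ < 1) :
    ∃ β : ℝ, 0 < β ∧
      f (u + β • p) ≤ f u + c₁ * β * ⟪gradient f u, p⟫ ∧
      ⟪gradient f (u + β • p), p⟫ ≥ c₂ * ⟪gradient f u, p⟫ := by
  set D : ℝ := ⟪gradient f u, p⟫ with hD
  have hdiff : Differentiable ℝ f := hC1.differentiable one_ne_zero
  -- derivative of φ(β) = f(u + β p)
  have hφ : ∀ β : ℝ, HasDerivAt (fun t : ℝ => f (u + t • p))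
      ⟪gradient f (u + β • p), p⟫ β := by
    intro β
    have hγ : HasDerivAt (fun t : ℝ => u + t • p) p β := by
      exact ((hasDerivAt_const β u).add ((hasDerivAt_id β).smul_const p)).congr_deriv (by simp)
    have hf := ((hdiff (u + β • p)).hasGradientAt).hasFDerivAt
    exact (hf.comp_hasDerivAt β hγ).congr_deriv (by simp)
  set g : ℝ → ℝ := fun β => f (u + β • p) - (f u + c₁ * β * D) with hg
  have hg0 : g 0 = 0 := by simp [hg]
  have hgd : ∀ β : ℝ, HasDerivAt g (⟪gradient f (u + β • p), p⟫ - c₁ * D) β := by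
    intro β
    exact (hφ β).sub (((hasDerivAt_id β).const_mul c₁).mul_const D |>.const_add (f u))
      |>.congr_deriv (by ring)
  have hgc : Continuous g := by
    have : Differentiable ℝ g := fun β => (hgd β).differentiableAt
    exact this.continuous
  have hcD : c₁ * D < 0 := mul_neg_of_pos_of_neg hc₁ hdesc
  -- a point b > 0 with g b > 0
  obtain ⟨m, hm⟩ := hray
  set q : ℝ := (m - f u) / (c₁ * D) with hq
  set b : ℝ := max 1 (q + 1) with hb
  have hb0 : (0 : ℝ) < b := lt_of_lt_of_le one_pos (le_max_left _ _)
  have hqb : q < b := lt_of_lt_of_le (by linarith) (le_max_right _ _)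
  have hgb : 0 < g b := by
    have hmb : m ≤ f (u + b • p) := hm ⟨b, hb0, rfl⟩
    have h1 : b * (c₁ * D) < q * (c₁ * D) := mul_lt_mul_of_neg_right hqb hcD
    have h2 : q * (c₁ * D) = m - f u := div_mul_cancel₀ _ (ne_of_lt hcD)
    have : c₁ * b * D < m - f u := by nlinarith
    simp only [hg]
    linarith
  -- a point a ∈ (0, b) with g a < 0
  have hslope : Filter.Tendsto (slope g 0) (nhdsWithin 0 {(0:ℝ)}ᶜ) (nhds (D - c₁ * D)) := by
    have := hasDerivAt_iff_tendsto_slope.mp (hgd 0)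
    simpa only [zero_smul, add_zero, ← hD] using this
  have hneg : D - c₁ * D < 0 := by nlinarith
  have hev : ∀ᶠ t in nhdsWithin 0 {(0:ℝ)}ᶜ, slope g 0 t < 0 :=
    hslope.eventually_lt_const hneg
  have hle : nhdsWithin (0:ℝ) (Set.Ioi 0) ≤ nhdsWithin 0 {(0:ℝ)}ᶜ :=
    nhdsWithin_mono 0 (fun x hx => ne_of_gt hx)
  have hev2 : ∀ᶠ t in nhdsWithin (0:ℝ) (Set.Ioi 0), slope g 0 t < 0 ∧ t < b ∧ 0 < t := by
    have h1 := hev.filter_mono hle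
    have h2 : ∀ᶠ t in nhdsWithin (0:ℝ) (Set.Ioi 0), t < b :=
      eventually_nhdsWithin_of_eventually_nhds (Filter.Tendsto.eventually_lt_const hb0 Filter.tendsto_id)
    have h3 : ∀ᶠ t in nhdsWithin (0:ℝ) (Set.Ioi 0), 0 < t :=
      eventually_mem_nhdsWithin
    exact h1.and (h2.and h3)
  obtain ⟨a, hsa, hab, ha0⟩ := hev2.exists
  have hga : g a < 0 := by
    have : slope g 0 a = g a / a := by simp [slope_def_field, hg0]
    rw [this] at hsa
    rcases div_neg_iff.mp hsa with ⟨_, h⟩ | ⟨h, _⟩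
    · linarith
    · exact h
  -- minimize g on [0, b]
  obtain ⟨x, hxmem, hxmin⟩ :=
    isCompact_Icc.exists_isMinOn (Set.nonempty_Icc.mpr hb0.le) hgc.continuousOn
  have hamem : a ∈ Set.Icc (0:ℝ) b := ⟨ha0.le, hab.le⟩
  have hgx : g x < 0 := lt_of_le_of_lt (hxmin hamem) hga
  have hx0 : 0 < x := by
    rcases lt_or_eq_of_le hxmem.1 with h | h
    · exact h
    · exfalso; rw [← h, hg0] at hgx; exact lt_irrefl 0 hgx
  have hxb : x < b := by
    rcases lt_or_eq_of_le hxmem.2 with h | h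
    · exact h
    · exfalso; rw [h] at hgx; linarith
  have hloc : IsLocalMin g x := hxmin.isLocalMin (Icc_mem_nhds hx0 hxb)
  have hderiv0 : ⟪gradient f (u + x • p), p⟫ - c₁ * D = 0 :=
    hloc.hasDerivAt_eq_zero (hgd x)
  refine ⟨x, hx0, ?_, ?_⟩
  · have : f (u + x • p) - (f u + c₁ * x * D) < 0 := hgx
    linarith
  · have heq : ⟪gradient f (u + x • p), p⟫ = c₁ * D := by linarith
    rw [heq]
    nlinarith
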